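/- Define, for s ∈ {0,…,T}, F(s) := E^λ_y[|X_{σ(τ* ∧ s)} − Y_{τ* ∧ s}|], where σ(τ) := ρ^{Root} ∧ (T − τ) for a {0,…,T}-valued stopping time τ of Y. Then F is constant on {0,…,T}. -/

import Mathlib

open MeasureTheory ProbabilityTheory

noncomputable section

namespace SwitchingIdentities

variable {Ω : Type*} [MeasurableSpace Ω]

/-- The increment `ξ` has the fair `±1` law. -/
def FairSign (P : Measure Ω) (ξ : Ω → ℤ) : Prop :=
  P {ω | ξ ω = 1} = 1 / 2 ∧ P {ω | ξ ω = -1} = 1 / 2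

/-- `ξ` and `η` are the increment families of two independent simple symmetric random
walks on `ℤ`: all increments are measurable, fair `±1` coins, and the whole family
`(ξ₀, ξ₁, …, η₀, η₁, …)` is independent. -/
def IndepSSRWIncrements (P : Measure Ω) (ξ η : ℕ → Ω → ℤ) : Prop :=
  (∀ n, Measurable (ξ n)) ∧ (∀ n, Measurable (η n)) ∧
  (∀ n, FairSign P (ξ n)) ∧ (∀ n, FairSign P (η n)) ∧
  iIndepFun (Sum.elim ξ η) P

/-- The random walk with increments `ξ` started at `x`. -/
def walk (ξ : ℕ → Ω → ℤ) (x : ℤ) (t : ℕ) (ω : Ω) : ℤ :=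
  x + ∑ i ∈ Finset.range t, ξ i ω

/-- A Root continuation set: if `(t,m) ∈ D` then `(s,m) ∈ D` for all `s < t`. -/
def IsRootCont {α : Type*} (D : Set (ℕ × α)) : Prop :=
  ∀ t m, (t, m) ∈ D → ∀ s, s < t → (s, m) ∈ D

/-- A Rost continuation set: if `(t,m) ∈ D` then `(s,m) ∈ D` for all `s > t`. -/
def IsRostCont {α : Type*} (D : Set (ℕ × α)) : Prop :=
  ∀ t m, (t, m) ∈ D → ∀ s, t < s → (s, m) ∈ D

/-- `hit D Z ω = inf {t : (t, Z_t) ∉ D}` (junk value `0` if the walk never leaves `D`). -/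
def hit {α : Type*} (D : Set (ℕ × α)) (Z : ℕ → Ω → α) (ω : Ω) : ℕ :=
  sInf {t | (t, Z t ω) ∉ D}

/-- `hitBy D Z n ω = inf {t : (t, Z_t) ∉ D} ∧ n` (equal to `n` if the walk never leaves `D`). -/
def hitBy {α : Type*} (D : Set (ℕ × α)) (Z : ℕ → Ω → α) (n : ℕ) (ω : Ω) : ℕ :=
  sInf ({t | (t, Z t ω) ∉ D} ∪ {n})

/-- `revHitBy D Z T ω = inf {t : (T − t, Z_t) ∉ D} ∧ T`, the exit time of the time-reversed
space-time walk, capped at `T`. -/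
def revHitBy {α : Type*} (D : Set (ℕ × α)) (Z : ℕ → Ω → α) (T : ℕ) (ω : Ω) : ℕ :=
  sInf ({t | (T - t, Z t ω) ∉ D} ∪ {T})

/-- The potential function `U_m(z) = −∑_x |z − x| m({x})` of a measure `m` on `ℤ`. -/
def potential (m : Measure ℤ) (z : ℤ) : ℝ :=
  -∑' w : ℤ, (|z - w| : ℤ) * (m {w}).toReal

/-- A measure on `ℤ` has a finite first moment. -/
def FiniteFirstMoment (m : Measure ℤ) : Prop :=
  Integrable (fun z : ℤ => (z : ℝ)) m

/-- `τ` is a stopping time of the natural filtration of the process `Z`: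
`{τ ≤ n} ∈ σ(Z_0, …, Z_n)` for every `n`. -/
def IsNatStopping {α : Type*} [MeasurableSpace α] (Z : ℕ → Ω → α) (τ : Ω → ℕ) : Prop :=
  ∀ n : ℕ,
    MeasurableSet[MeasurableSpace.comap (fun ω => (fun i : Fin (n + 1) => Z i ω)) inferInstance]
      {ω | τ ω ≤ n}

/-- The law `μ^{Root}` of `X_{ρ^{Root}}` where `X` has increments `ξ` and `X_0 ∼ λ`. -/
def muRoot (P : Measure Ω) (ξ : ℕ → Ω → ℤ) (D : Set (ℕ × ℤ)) (lam : Measure ℤ) : Measure ℤ :=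
  Measure.map (fun p : ℤ × Ω => walk ξ p.1 (hit D (walk ξ p.1) p.2) p.2) (lam.prod P)

/-- The law `μ^{Root}_T` of `X_{ρ^{Root} ∧ T}` where `X` has increments `ξ` and `X_0 ∼ λ`. -/
def muRootT (P : Measure Ω) (ξ : ℕ → Ω → ℤ) (D : Set (ℕ × ℤ)) (lam : Measure ℤ) (T : ℕ) :
    Measure ℤ :=
  Measure.map (fun p : ℤ × Ω => walk ξ p.1 (hitBy D (walk ξ p.1) T p.2) p.2) (lam.prod P)

set_option linter.unusedSectionVars false

/-! ### Pure (deterministic) versions -/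

def pw (x : ℤ) (u : ℕ → ℤ) (t : ℕ) : ℤ := x + ∑ i ∈ Finset.range t, u i

def pr (D : Set (ℕ × ℤ)) (x : ℤ) (u : ℕ → ℤ) (m : ℕ) : ℕ :=
  sInf ({t | (t, pw x u t) ∉ D} ∪ {m})

def ps (D : Set (ℕ × ℤ)) (x : ℤ) (u : ℕ → ℤ) (m : ℕ) : ℤ := pw x u (pr D x u m)

lemma walk_eq (ξ : ℕ → Ω → ℤ) (x : ℤ) (t : ℕ) (ω : Ω) :
    walk ξ x t ω = pw x (fun i => ξ i ω) t := rfl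

lemma hitBy_eq (D : Set (ℕ × ℤ)) (ξ : ℕ → Ω → ℤ) (x : ℤ) (m : ℕ) (ω : Ω) :
    hitBy D (walk ξ x) m ω = pr D x (fun i => ξ i ω) m := rfl

lemma stopped_eq (D : Set (ℕ × ℤ)) (ξ : ℕ → Ω → ℤ) (x : ℤ) (m : ℕ) (ω : Ω) :
    walk ξ x (hitBy D (walk ξ x) m ω) ω = ps D x (fun i => ξ i ω) m := rfl

lemma revHitBy_eq (D : Set (ℕ × ℤ)) (η : ℕ → Ω → ℤ) (y : ℤ) (T : ℕ) (ω : Ω) :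
    revHitBy D (walk η y) T ω
      = pr {p : ℕ × ℤ | (T - p.1, p.2) ∈ D} y (fun j => η j ω) T := rfl

lemma pw_succ (x : ℤ) (u : ℕ → ℤ) (t : ℕ) : pw x u (t + 1) = pw x u t + u t := by
  simp [pw, Finset.sum_range_succ, add_assoc]

lemma pw_congr {x : ℤ} {u u' : ℕ → ℤ} {t : ℕ} (h : ∀ i < t, u i = u' i) :
    pw x u t = pw x u' t := by
  unfold pw
  congr 1
  exact Finset.sum_congr rfl fun i hi => h i (Finset.mem_range.mp hi)

lemma sInf_union_congr {S S' : Set ℕ} (m : ℕ) (h : ∀ t ≤ m, (t ∈ S ↔ t ∈ S')) :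
    sInf (S ∪ {m}) = sInf (S' ∪ {m}) := by
  have key : ∀ S S' : Set ℕ, (∀ t ≤ m, (t ∈ S ↔ t ∈ S')) →
      sInf (S ∪ {m}) ≤ sInf (S' ∪ {m}) := by
    intro S S' h
    have hne : (S' ∪ {m} : Set ℕ).Nonempty := ⟨m, Or.inr rfl⟩
    have hle : sInf (S' ∪ {m}) ≤ m := Nat.sInf_le (Or.inr rfl)
    rcases Nat.sInf_mem hne with hS' | hm
    · exact Nat.sInf_le (Or.inl ((h _ hle).2 hS'))
    · have : sInf (S' ∪ {m}) = m := hm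
      rw [this]
      exact Nat.sInf_le (Or.inr rfl)
  exact le_antisymm (key _ _ h) (key _ _ fun t ht => (h t ht).symm)

lemma pr_le (D : Set (ℕ × ℤ)) (x : ℤ) (u : ℕ → ℤ) (m : ℕ) : pr D x u m ≤ m :=
  Nat.sInf_le (Or.inr rfl)

lemma pr_congr {D : Set (ℕ × ℤ)} {x : ℤ} {u u' : ℕ → ℤ} {m : ℕ}
    (h : ∀ i < m, u i = u' i) : pr D x u m = pr D x u' m := by
  unfold pr
  apply sInf_union_congr
  intro t ht
  have : pw x u t = pw x u' t := pw_congr fun i hi => h i (lt_of_lt_of_le hi ht)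
  simp [this]

lemma ps_congr {D : Set (ℕ × ℤ)} {x : ℤ} {u u' : ℕ → ℤ} {m : ℕ}
    (h : ∀ i < m, u i = u' i) : ps D x u m = ps D x u' m := by
  unfold ps
  rw [pr_congr h]
  exact pw_congr fun i hi => h i (lt_of_lt_of_le hi (pr_le D x u' m))

lemma min_sInf {S : Set ℕ} {m s : ℕ} (h : s ≤ m) :
    min (sInf (S ∪ {m})) s = sInf (S ∪ {s}) := by
  have hk : sInf (S ∪ {s}) ∈ S ∪ {s} := Nat.sInf_mem ⟨s, Or.inr rfl⟩
  have hks : sInf (S ∪ {s}) ≤ s := Nat.sInf_le (Or.inr rfl)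
  apply le_antisymm
  · rcases hk with hS | hs
    · exact min_le_of_left_le (Nat.sInf_le (Or.inl hS))
    · have : sInf (S ∪ {s}) = s := hs
      rw [this]; exact min_le_right _ _
  · refine le_min ?_ hks
    refine le_csInf ⟨m, Or.inr rfl⟩ ?_
    rintro j (hj | hj)
    · exact Nat.sInf_le (Or.inl hj)
    · have : j = m := hj
      omega
  
lemma pr_min {D : Set (ℕ × ℤ)} {x : ℤ} {u : ℕ → ℤ} {m s : ℕ} (h : s ≤ m) :
    min (pr D x u m) s = pr D x u s := min_sInf h

lemma pr_mem_cases (D : Set (ℕ × ℤ)) (x : ℤ) (u : ℕ → ℤ) (m : ℕ) :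
    ((pr D x u m, ps D x u m) ∉ D) ∨ pr D x u m = m := by
  rcases Nat.sInf_mem (⟨m, Or.inr rfl⟩ : ({t | (t, pw x u t) ∉ D} ∪ {m} : Set ℕ).Nonempty)
    with hS | hm
  · exact Or.inl hS
  · exact Or.inr hm

lemma pr_succ_of_exit {D : Set (ℕ × ℤ)} {x : ℤ} {u : ℕ → ℤ} {n : ℕ}
    (h : (pr D x u n, ps D x u n) ∉ D) : pr D x u (n + 1) = pr D x u n := by
  apply le_antisymm
  · exact Nat.sInf_le (Or.inl h)
  · refine le_csInf ⟨n + 1, Or.inr rfl⟩ ?_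
    rintro j (hj | hj)
    · exact Nat.sInf_le (Or.inl hj)
    · have : j = n + 1 := hj
      have := pr_le D x u n
      omega

lemma pr_succ_of_cont {D : Set (ℕ × ℤ)} {x : ℤ} {u : ℕ → ℤ} {n : ℕ}
    (h : (pr D x u n, ps D x u n) ∈ D) :
    pr D x u n = n ∧ pr D x u (n + 1) = n + 1 := by
  have h1 : pr D x u n = n := by
    rcases pr_mem_cases D x u n with h' | h'
    · exact absurd h h'
    · exact h'
  refine ⟨h1, le_antisymm (pr_le _ _ _ _) ?_⟩
  refine le_csInf ⟨n + 1, Or.inr rfl⟩ ?_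
  rintro j (hj | hj)
  · by_contra hlt
    push_neg at hlt
    have hle : pr D x u n ≤ j := Nat.sInf_le (Or.inl hj)
    have hjeq : j = n := by omega
    have hps : ps D x u n = pw x u n := by rw [ps, h1]
    rw [hps, h1] at h
    rw [hjeq] at hj
    exact hj h
  · have : j = n + 1 := hj
    omega

lemma abs_add_abs_of_ne {b : ℤ} (hb : b ≠ 0) : |b - 1| + |b + 1| = 2 * |b| := by
  rcases hb.lt_or_gt with h | h
  · rw [abs_of_neg (by omega : b - 1 < 0), abs_of_nonpos (by omega : b + 1 ≤ 0),
      abs_of_neg h]; ring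
  · rw [abs_of_nonneg (by omega : 0 ≤ b - 1), abs_of_pos (by omega : 0 < b + 1),
      abs_of_pos h]; ring

/-- The combinatorial core of the switching argument. -/
lemma core {D : Set (ℕ × ℤ)} (hD : IsRootCont D) {n : ℕ} (x Ys : ℤ) (u u₁ u₂ : ℕ → ℤ)
    (h1 : ∀ i < n, u₁ i = u i) (h2 : ∀ i < n, u₂ i = u i)
    (e1 : u₁ n = 1) (e2 : u₂ n = -1) (hmem : (n + 1, Ys) ∈ D) :
    |ps D x u₁ (n + 1) - Ys| + |ps D x u₂ (n + 1) - Ys|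
      = |ps D x u n - (Ys + 1)| + |ps D x u n - (Ys - 1)| := by
  have hr1 : pr D x u₁ n = pr D x u n := pr_congr h1
  have hr2 : pr D x u₂ n = pr D x u n := pr_congr h2
  have hs1 : ps D x u₁ n = ps D x u n := ps_congr h1
  have hs2 : ps D x u₂ n = ps D x u n := ps_congr h2
  set ρ := pr D x u n with hρ
  set p := ps D x u n with hp
  by_cases hc : (ρ, p) ∈ D
  · -- not yet stopped: the walk takes one more step
    have hc1 : (pr D x u₁ n, ps D x u₁ n) ∈ D := by rw [hr1, hs1]; exact hc
    have hc2 : (pr D x u₂ n, ps D x u₂ n) ∈ D := by rw [hr2, hs2]; exact hc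
    obtain ⟨hn1, hn1'⟩ := pr_succ_of_cont hc1
    obtain ⟨hn2, hn2'⟩ := pr_succ_of_cont hc2
    have hv1 : ps D x u₁ (n + 1) = pw x u n + 1 := by
      rw [ps, hn1', pw_succ, e1, pw_congr h1]
    have hv2 : ps D x u₂ (n + 1) = pw x u n + (-1) := by
      rw [ps, hn2', pw_succ, e2, pw_congr h2]
    have hρeq : ρ = n := by rw [← hr1]; exact hn1
    have hpn : p = pw x u n := by
      rw [hp, ps, ← hρ, hρeq]
    rw [hv1, hv2, ← hpn]
    have l1 : p + 1 - Ys = p - Ys + 1 := by ring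
    have l2 : p + (-1) - Ys = p - Ys - 1 := by ring
    have l3 : p - (Ys + 1) = p - Ys - 1 := by ring
    have l4 : p - (Ys - 1) = p - Ys + 1 := by ring
    rw [l1, l2, l3, l4]; ring
  · -- already stopped
    have hc1 : (pr D x u₁ n, ps D x u₁ n) ∉ D := by rw [hr1, hs1]; exact hc
    have hc2 : (pr D x u₂ n, ps D x u₂ n) ∉ D := by rw [hr2, hs2]; exact hc
    have hv1 : ps D x u₁ (n + 1) = p := by
      rw [ps, pr_succ_of_exit hc1, ← ps, hs1]
    have hv2 : ps D x u₂ (n + 1) = p := by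
      rw [ps, pr_succ_of_exit hc2, ← ps, hs2]
    have hρn : ρ ≤ n := pr_le _ _ _ _
    have hYρ : (ρ, Ys) ∈ D := hD (n + 1) Ys hmem ρ (by omega)
    have hne : p - Ys ≠ 0 := by
      intro h0
      have : p = Ys := by omega
      rw [this] at hc
      exact hc hYρ
    have l3 : p - (Ys + 1) = p - Ys - 1 := by ring
    have l4 : p - (Ys - 1) = p - Ys + 1 := by ring
    rw [hv1, hv2, l3, l4, abs_add_abs_of_ne hne]
    ring



/-! ### Probabilistic auxiliary lemmas -/

lemma fair_ae {P : Measure Ω} [IsProbabilityMeasure P] {c : Ω → ℤ}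
    (hm : Measurable c) (hf : FairSign P c) :
    ∀ᵐ ω ∂P, c ω = 1 ∨ c ω = -1 := by
  have h1 : MeasurableSet {ω | c ω = 1} := hm (measurableSet_singleton 1)
  have h2 : MeasurableSet {ω | c ω = -1} := hm (measurableSet_singleton (-1))
  have hdisj : Disjoint {ω | c ω = 1} {ω | c ω = -1} := by
    rw [Set.disjoint_left]
    intro ω hω1 hω2
    simp only [Set.mem_setOf_eq] at hω1 hω2
    omega
  have hu : P ({ω | c ω = 1} ∪ {ω | c ω = -1}) = 1 := by
    rw [measure_union hdisj h2, hf.1, hf.2]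
    rw [ENNReal.div_add_div_same, one_add_one_eq_two]
    exact ENNReal.div_self (by norm_num) (by norm_num)
  rw [ae_iff]
  have : {ω | ¬(c ω = 1 ∨ c ω = -1)} = ({ω | c ω = 1} ∪ {ω | c ω = -1})ᶜ := by
    ext ω; simp [not_or]
  rw [this]
  rw [measure_compl (h1.union h2) (measure_ne_top _ _), hu]
  simp

lemma integral_if_coin {P : Measure Ω} [IsProbabilityMeasure P] {c : Ω → ℤ}
    (hc : Measurable c) (e : ℤ) (he : P {ω | c ω = e} = 1 / 2) :
    ∫ ω, (if c ω = e then (1:ℝ) else 0) ∂P = 1 / 2 := by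
  have hs : MeasurableSet {ω | c ω = e} := hc (measurableSet_singleton e)
  have : (fun ω => if c ω = e then (1:ℝ) else 0)
      = Set.indicator {ω | c ω = e} (fun _ => (1:ℝ)) := by
    funext ω; simp [Set.indicator_apply]
  rw [this, integral_indicator_const _ hs, measureReal_def, he]
  simp [ENNReal.toReal_div]

/-- Integrating out an independent fair coin. -/
lemma integral_coin {α : Type*} [MeasurableSpace α] [Countable α] [MeasurableSingletonClass α]
    {P : Measure Ω} [IsProbabilityMeasure P] {c : Ω → ℤ} {V : Ω → α}
    (hc : Measurable c) (hV : Measurable V) (hfair : FairSign P c)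
    (hind : IndepFun V c P) (g : α → ℤ → ℝ)
    (hint1 : Integrable (fun ω => g (V ω) 1) P)
    (hint2 : Integrable (fun ω => g (V ω) (-1)) P) :
    ∫ ω, g (V ω) (c ω) ∂P = (∫ ω, g (V ω) 1 ∂P + ∫ ω, g (V ω) (-1) ∂P) / 2 := by
  classical
  have hae := fair_ae hc hfair
  have heq : ∀ᵐ ω ∂P, g (V ω) (c ω)
      = (if c ω = 1 then (1:ℝ) else 0) * g (V ω) 1
        + (if c ω = -1 then (1:ℝ) else 0) * g (V ω) (-1) := by
    filter_upwards [hae] with ω h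
    rcases h with h | h <;> rw [h] <;> norm_num
  rw [integral_congr_ae heq]
  have hφ1 : Measurable fun e : ℤ => if e = 1 then (1:ℝ) else 0 := measurable_of_countable _
  have hφ2 : Measurable fun e : ℤ => if e = -1 then (1:ℝ) else 0 := measurable_of_countable _
  have hb1 : Integrable (fun ω => (if c ω = 1 then (1:ℝ) else 0) * g (V ω) 1) P :=
    hint1.bdd_mul ((hφ1.comp hc).aestronglyMeasurable)
      (c := 1) (Filter.Eventually.of_forall fun ω => by by_cases h : c ω = 1 <;> simp [h])
  have hb2 : Integrable (fun ω => (if c ω = -1 then (1:ℝ) else 0) * g (V ω) (-1)) P :=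
    hint2.bdd_mul ((hφ2.comp hc).aestronglyMeasurable)
      (c := 1) (Filter.Eventually.of_forall fun ω => by by_cases h : c ω = -1 <;> simp [h])
  rw [integral_add hb1 hb2]
  have hind1 : IndepFun (fun ω => (if c ω = 1 then (1:ℝ) else 0)) (fun ω => g (V ω) 1) P := by
    have := (hind.symm.comp hφ1 (measurable_of_countable (fun a => g a 1)))
    exact this
  have hind2 : IndepFun (fun ω => (if c ω = -1 then (1:ℝ) else 0)) (fun ω => g (V ω) (-1)) P := by
    have := (hind.symm.comp hφ2 (measurable_of_countable (fun a => g a (-1))))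
    exact this
  have hm1 : ∫ ω, (if c ω = 1 then (1:ℝ) else 0) * g (V ω) 1 ∂P
      = (1/2) * ∫ ω, g (V ω) 1 ∂P := by
    have := hind1.integral_fun_mul_eq_mul_integral ((hφ1.comp hc).aestronglyMeasurable) hint1.aestronglyMeasurable
    have h12 := integral_if_coin hc 1 hfair.1
    calc ∫ ω, (if c ω = 1 then (1:ℝ) else 0) * g (V ω) 1 ∂P
        = (∫ ω, (if c ω = 1 then (1:ℝ) else 0) ∂P) * ∫ ω, g (V ω) 1 ∂P := this
      _ = (1/2) * ∫ ω, g (V ω) 1 ∂P := by rw [h12]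
  have hm2 : ∫ ω, (if c ω = -1 then (1:ℝ) else 0) * g (V ω) (-1) ∂P
      = (1/2) * ∫ ω, g (V ω) (-1) ∂P := by
    have := hind2.integral_fun_mul_eq_mul_integral ((hφ2.comp hc).aestronglyMeasurable) hint2.aestronglyMeasurable
    have h12 := integral_if_coin hc (-1) hfair.2
    calc ∫ ω, (if c ω = -1 then (1:ℝ) else 0) * g (V ω) (-1) ∂P
        = (∫ ω, (if c ω = -1 then (1:ℝ) else 0) ∂P) * ∫ ω, g (V ω) (-1) ∂P := this
      _ = (1/2) * ∫ ω, g (V ω) (-1) ∂P := by rw [h12]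
  rw [hm1, hm2]
  ring



/-! ### Bridging definitions -/

def rev (D : Set (ℕ × ℤ)) (T : ℕ) : Set (ℕ × ℤ) := {p | (T - p.1, p.2) ∈ D}

/-- The integrand of `F`. -/
def II (D : Set (ℕ × ℤ)) (T : ℕ) (y : ℤ) (ξ η : ℕ → Ω → ℤ) (t : ℕ) (p : ℤ × Ω) : ℝ :=
  ((|walk ξ p.1 (hitBy D (walk ξ p.1) (T - min (revHitBy D (walk η y) T p.2) t) p.2) p.2
      - walk η y (min (revHitBy D (walk η y) T p.2) t) p.2| : ℤ) : ℝ)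

/-- Pure version of the integrand. -/
def IPf (D : Set (ℕ × ℤ)) (T t : ℕ) (y x : ℤ) (uu ww : ℕ → ℤ) : ℝ :=
  ((|ps D x uu (T - min (pr (rev D T) y ww T) t)
      - pw y ww (min (pr (rev D T) y ww T) t)| : ℤ) : ℝ)

lemma II_eq (D : Set (ℕ × ℤ)) (T : ℕ) (y : ℤ) (ξ η : ℕ → Ω → ℤ) (t : ℕ) (x : ℤ) (ω : Ω) :
    II D T y ξ η t (x, ω) = IPf D T t y x (fun i => ξ i ω) (fun j => η j ω) := rfl

lemma IPf_congr {D : Set (ℕ × ℤ)} {T t : ℕ} {y x : ℤ} {uu uu' ww ww' : ℕ → ℤ}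
    (hu : ∀ i < T, uu i = uu' i) (hw : ∀ j < T, ww j = ww' j) :
    IPf D T t y x uu ww = IPf D T t y x uu' ww' := by
  have hr : pr (rev D T) y ww T = pr (rev D T) y ww' T := pr_congr hw
  have hrle : min (pr (rev D T) y ww' T) t ≤ T := le_trans (min_le_left _ _) (pr_le _ _ _ _)
  unfold IPf
  rw [hr, ps_congr (fun i hi => hu i (by omega)), pw_congr (fun j hj => hw j (by omega))]

lemma pr_eq_cap {D : Set (ℕ × ℤ)} {x : ℤ} {u : ℕ → ℤ} {m : ℕ}
    (h : ∀ t < m, (t, pw x u t) ∈ D) : pr D x u m = m := by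
  refine le_antisymm (pr_le _ _ _ _) (le_csInf ⟨m, Or.inr rfl⟩ ?_)
  rintro j (hj | hj)
  · by_contra hlt
    push_neg at hlt
    exact hj (h j hlt)
  · exact le_of_eq (by exact hj.symm)

def fill (n : ℕ) (a : Fin n → ℤ) (e : ℤ) : ℕ → ℤ := fun i => if h : i < n then a ⟨i, h⟩ else e

lemma fill_lt {n : ℕ} (a : Fin n → ℤ) (e : ℤ) {i : ℕ} (h : i < n) :
    fill n a e i = a ⟨i, h⟩ := dif_pos h

lemma fill_ge {n : ℕ} (a : Fin n → ℤ) (e : ℤ) {i : ℕ} (h : n ≤ i) :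
    fill n a e i = e := dif_neg (by omega)

lemma fill_agree {n : ℕ} (u : ℕ → ℤ) (e : ℤ) : ∀ i < n, fill n (fun k : Fin n => u k) e i = u i :=
  fun i hi => by rw [fill_lt _ _ hi]

/-! ### Bounds -/

lemma pw_abs_le {x : ℤ} {u : ℕ → ℤ} {t : ℕ} (h : ∀ i < t, |u i| ≤ 1) :
    |pw x u t| ≤ |x| + t := by
  have h1 : |∑ i ∈ Finset.range t, u i| ≤ (t : ℤ) := by
    calc |∑ i ∈ Finset.range t, u i| ≤ ∑ i ∈ Finset.range t, |u i| :=
          Finset.abs_sum_le_sum_abs _ _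
      _ ≤ ∑ _i ∈ Finset.range t, (1 : ℤ) :=
          Finset.sum_le_sum fun i hi => h i (Finset.mem_range.mp hi)
      _ = t := by simp
  calc |pw x u t| = |x + ∑ i ∈ Finset.range t, u i| := rfl
    _ ≤ |x| + |∑ i ∈ Finset.range t, u i| := abs_add_le _ _
    _ ≤ |x| + t := by omega

lemma ps_abs_le {D : Set (ℕ × ℤ)} {x : ℤ} {u : ℕ → ℤ} {m : ℕ} (h : ∀ i < m, |u i| ≤ 1) :
    |ps D x u m| ≤ |x| + m := by
  have hρ := pr_le D x u m
  calc |ps D x u m| = |pw x u (pr D x u m)| := rfl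
    _ ≤ |x| + pr D x u m := pw_abs_le fun i hi => h i (by omega)
    _ ≤ |x| + m := by omega

lemma IPf_abs_le {D : Set (ℕ × ℤ)} {T t : ℕ} {y x : ℤ} {uu ww : ℕ → ℤ}
    (hu : ∀ i < T, |uu i| ≤ 1) (hw : ∀ j < T, |ww j| ≤ 1) :
    |IPf D T t y x uu ww| ≤ |(x : ℝ)| + |(y : ℝ)| + 2 * T := by
  set r := min (pr (rev D T) y ww T) t with hrdef
  have hrle : r ≤ T := le_trans (min_le_left _ _) (pr_le _ _ _ _)
  have h1 : |ps D x uu (T - r)| ≤ |x| + (T : ℤ) := by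
    have := ps_abs_le (D := D) (x := x) (m := T - r) (fun i hi => hu i (by omega))
    have h2 : ((T - r : ℕ) : ℤ) ≤ (T : ℤ) := by exact_mod_cast Nat.sub_le T r
    omega
  have h2 : |pw y ww r| ≤ |y| + (T : ℤ) := by
    have := pw_abs_le (x := y) (u := ww) (t := r) (fun j hj => hw j (by omega))
    have : |pw y ww r| ≤ |y| + (r : ℤ) := this
    have h3 : (r : ℤ) ≤ (T : ℤ) := by exact_mod_cast hrle
    omega
  have h3 : |ps D x uu (T - r) - pw y ww r| ≤ |x| + |y| + 2 * T := by
    have := abs_sub (ps D x uu (T - r)) (pw y ww r)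
    omega
  have : |IPf D T t y x uu ww| = ((|ps D x uu (T - r) - pw y ww r| : ℤ) : ℝ) := by
    rw [IPf, ← hrdef, abs_of_nonneg (by positivity)]
  rw [this]
  push_cast
  exact_mod_cast (by push_cast; exact_mod_cast h3 : ((|ps D x uu (T - r) - pw y ww r| : ℤ) : ℝ) ≤ ((|x| + |y| + 2 * T : ℤ) : ℝ))


set_option maxHeartbeats 1000000

lemma step_eq
    (P : Measure Ω) [IsProbabilityMeasure P] (ξ η : ℕ → Ω → ℤ)
    (hξm : ∀ n, Measurable (ξ n)) (hηm : ∀ n, Measurable (η n))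
    (hξf : ∀ n, FairSign P (ξ n)) (hηf : ∀ n, FairSign P (η n))
    (hindep : iIndepFun (Sum.elim ξ η) P)
    (D : Set (ℕ × ℤ)) (hD : IsRootCont D)
    (lam : Measure ℤ) [IsProbabilityMeasure lam]
    (hlam : Integrable (fun z : ℤ => (z : ℝ)) lam)
    (T : ℕ) (y : ℤ) (s : ℕ) (hs : s < T) :
    ∫ p : ℤ × Ω, II D T y ξ η (s + 1) p ∂(lam.prod P)
      = ∫ p : ℤ × Ω, II D T y ξ η s p ∂(lam.prod P) := by
  classical
  set M := T + 1 with hMdef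
  set n := T - s - 1 with hndef
  have hTn : T - s = n + 1 := by omega
  have hTn' : T - (s + 1) = n := by omega
  have hnT : n < T := by omega
  have hsT : s + 1 ≤ T := hs
  -- measurability of the integrand on the product space
  have hWp1 : Measurable fun p : ℤ × Ω => (fun i : Fin M => ξ i p.2) :=
    measurable_pi_lambda _ fun i => (hξm i).comp measurable_snd
  have hWp2 : Measurable fun p : ℤ × Ω => (fun j : Fin M => η j p.2) :=
    measurable_pi_lambda _ fun j => (hηm j).comp measurable_snd
  have hWp : Measurable (fun p : ℤ × Ω =>
      (p.1, fun i : Fin M => ξ i p.2, fun j : Fin M => η j p.2)) :=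
    measurable_fst.prodMk (hWp1.prodMk hWp2)
  have hIImeas : ∀ t, Measurable (fun p : ℤ × Ω => II D T y ξ η t p) := by
    intro t
    have hfun : (fun p : ℤ × Ω => II D T y ξ η t p)
        = (fun q : ℤ × (Fin M → ℤ) × (Fin M → ℤ) =>
            IPf D T t y q.1 (fill M q.2.1 0) (fill M q.2.2 0))
          ∘ (fun p : ℤ × Ω => (p.1, fun i : Fin M => ξ i p.2, fun j : Fin M => η j p.2)) := by
      funext p
      have h0 : II D T y ξ η t p
          = IPf D T t y p.1 (fun i => ξ i p.2) (fun j => η j p.2) := rfl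
      simp only [Function.comp_apply]
      rw [h0]
      exact IPf_congr (fun i hi => (fill_agree (fun k => ξ k p.2) 0 i (by omega)).symm)
        (fun j hj => (fill_agree (fun k => η k p.2) 0 j (by omega)).symm)
    rw [hfun]
    exact (measurable_of_countable _).comp hWp
  -- a.e. the increments are ±1
  have hBae : ∀ᵐ ω ∂P, ∀ i, (ξ i ω = 1 ∨ ξ i ω = -1) ∧ (η i ω = 1 ∨ η i ω = -1) :=
    ae_all_iff.mpr fun i => ((fair_ae (hξm i) (hξf i)).and (fair_ae (hηm i) (hηf i)))
  have habs : ∀ ω, (∀ i, (ξ i ω = 1 ∨ ξ i ω = -1) ∧ (η i ω = 1 ∨ η i ω = -1)) →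
      ∀ i, |ξ i ω| ≤ 1 ∧ |η i ω| ≤ 1 := by
    intro ω h i
    obtain ⟨h1, h2⟩ := h i
    constructor
    · rcases h1 with h' | h' <;> simp [h']
    · rcases h2 with h' | h' <;> simp [h']
  have hQmeas : MeasurableSet
      {ω : Ω | ∀ i, (ξ i ω = 1 ∨ ξ i ω = -1) ∧ (η i ω = 1 ∨ η i ω = -1)} := by
    rw [Set.setOf_forall]
    refine MeasurableSet.iInter fun i => ?_
    exact (((hξm i) (measurableSet_singleton 1)).union
        ((hξm i) (measurableSet_singleton (-1)))).inter
      (((hηm i) (measurableSet_singleton 1)).union ((hηm i) (measurableSet_singleton (-1))))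
  have hprodae : ∀ᵐ p : ℤ × Ω ∂(lam.prod P),
      ∀ i, (ξ i p.2 = 1 ∨ ξ i p.2 = -1) ∧ (η i p.2 = 1 ∨ η i p.2 = -1) := by
    have hmap : Measure.map Prod.snd (lam.prod P) = P := by
      rw [Measure.map_snd_prod]; simp
    exact (ae_map_iff measurable_snd.aemeasurable hQmeas).mp (by rw [hmap]; exact hBae)
  -- integrability of the integrand on the product space
  have hCint : Integrable (fun p : ℤ × Ω => |(p.1 : ℝ)| + (|(y : ℝ)| + 2 * T)) (lam.prod P) := by
    refine Integrable.add ?_ (integrable_const _)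
    have hmapfst : Measure.map Prod.fst (lam.prod P) = lam := by
      rw [Measure.map_fst_prod]; simp
    have h1 : Integrable (fun p : ℤ × Ω => ((p.1 : ℤ) : ℝ)) (lam.prod P) :=
      (integrable_map_measure
        (measurable_of_countable (fun z : ℤ => (z : ℝ))).aestronglyMeasurable
        measurable_fst.aemeasurable).mp (by rw [hmapfst]; exact hlam)
    exact h1.abs
  have hIIint : ∀ t, Integrable (fun p : ℤ × Ω => II D T y ξ η t p) (lam.prod P) := by
    intro t
    refine Integrable.mono' hCint (hIImeas t).aestronglyMeasurable ?_
    filter_upwards [hprodae] with p hp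
    have hb := habs p.2 hp
    have h0 : II D T y ξ η t p
        = IPf D T t y p.1 (fun i => ξ i p.2) (fun j => η j p.2) := rfl
    rw [Real.norm_eq_abs, h0]
    have := IPf_abs_le (D := D) (T := T) (t := t) (y := y) (x := p.1)
      (fun i _ => (hb i).1) (fun j _ => (hb j).2)
    linarith
  -- Fubini
  rw [MeasureTheory.integral_prod _ (hIIint (s + 1)), MeasureTheory.integral_prod _ (hIIint s)]
  refine integral_congr_ae (Filter.Eventually.of_forall fun x => ?_)
  -- now x is fixed
  set C : ℝ := |(x : ℝ)| + |(y : ℝ)| + 2 * T with hCdef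
  have hC0 : 0 ≤ C := by positivity
  set V : Ω → ((Fin n → ℤ) × (Fin s → ℤ)) := fun ω =>
    ((fun i : Fin n => ξ i ω), (fun j : Fin s => η j ω)) with hVdef
  have hV1 : Measurable fun ω : Ω => (fun i : Fin n => ξ i ω) :=
    measurable_pi_lambda _ fun i => hξm i
  have hV2 : Measurable fun ω : Ω => (fun j : Fin s => η j ω) :=
    measurable_pi_lambda _ fun j => hηm j
  have hV : Measurable V := hV1.prodMk hV2
  set cnd : Ω → Prop := fun ω => ∀ t ≤ s, (T - t, pw y (fun j => η j ω) t) ∈ D with hcnddef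
  set g1 : ((Fin n → ℤ) × (Fin s → ℤ)) → ℤ → ℝ := fun a f =>
    if ∀ t ≤ s, (T - t, pw y (fill s a.2 0) t) ∈ D then
      ((|ps D x (fill n a.1 0) n - pw y (fill s a.2 f) (s + 1)| : ℤ) : ℝ)
    else 0 with hg1def
  set g2 : ((Fin n → ℤ) × (Fin s → ℤ)) → ℤ → ℝ := fun a e =>
    if ∀ t ≤ s, (T - t, pw y (fill s a.2 0) t) ∈ D then
      ((|ps D x (fill n a.1 e) (n + 1) - pw y (fill s a.2 0) s| : ℤ) : ℝ)
    else 0 with hg2def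
  -- condition transfer
  have condV : ∀ ω : Ω, cnd ω ↔ (∀ t ≤ s, (T - t, pw y (fill s (V ω).2 0) t) ∈ D) := by
    intro ω
    simp only [hcnddef, hVdef]
    have hpweq : ∀ t ≤ s, pw y (fun j => η j ω) t
        = pw y (fill s (fun j : Fin s => η j ω) 0) t := fun t ht =>
      pw_congr fun j hj => (fill_agree (fun j => η j ω) 0 j (by omega)).symm
    constructor
    · intro h t ht; rw [← hpweq t ht]; exact h t ht
    · intro h t ht; rw [hpweq t ht]; exact h t ht
  -- exit times under the condition
  have hmin1 : ∀ ω : Ω, cnd ω → min (pr (rev D T) y (fun j => η j ω) T) (s + 1) = s + 1 := by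
    intro ω hcnd
    rw [pr_min hsT]
    exact pr_eq_cap fun t ht => hcnd t (by omega)
  have hmin2 : ∀ ω : Ω, cnd ω → min (pr (rev D T) y (fun j => η j ω) T) s = s := by
    intro ω hcnd
    rw [pr_min (le_of_lt hs)]
    exact pr_eq_cap fun t ht => hcnd t (by omega)
  have hminne : ∀ ω : Ω, ¬ cnd ω →
      min (pr (rev D T) y (fun j => η j ω) T) (s + 1)
        = min (pr (rev D T) y (fun j => η j ω) T) s := by
    intro ω hcnd
    simp only [hcnddef] at hcnd
    push_neg at hcnd
    obtain ⟨t, ht, hmem⟩ := hcnd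
    have hτle : pr (rev D T) y (fun j => η j ω) T ≤ t := Nat.sInf_le (Or.inl hmem)
    rw [min_eq_left (by omega), min_eq_left (by omega)]
  have hIIx : ∀ t (ω : Ω), II D T y ξ η t (x, ω)
      = IPf D T t y x (fun i => ξ i ω) (fun j => η j ω) := fun t ω => rfl
  -- pointwise decomposition, (s+1) side
  have step1 : ∀ ω : Ω, II D T y ξ η (s + 1) (x, ω)
      = (if cnd ω then (0 : ℝ) else II D T y ξ η s (x, ω)) + g1 (V ω) (η s ω) := by
    intro ω
    by_cases hcnd : cnd ω
    · have hcnd2 : ∀ t ≤ s, (T - t, pw y (fill s (V ω).2 0) t) ∈ D := (condV ω).mp hcnd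
      rw [if_pos hcnd]
      simp only [hVdef] at hcnd2
      simp only [hg1def, hVdef]
      rw [if_pos hcnd2, zero_add, hIIx]
      unfold IPf
      rw [hmin1 ω hcnd, hTn']
      have e1 : ps D x (fun i => ξ i ω) n = ps D x (fill n (fun i : Fin n => ξ i ω) 0) n :=
        ps_congr fun i hi => (fill_agree (fun i => ξ i ω) 0 i hi).symm
      have e2 : pw y (fun j => η j ω) (s + 1)
          = pw y (fill s (fun j : Fin s => η j ω) (η s ω)) (s + 1) := by
        refine pw_congr fun j hj => ?_
        by_cases hjs : j < s
        · exact (fill_agree (fun j => η j ω) (η s ω) j hjs).symm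
        · have hjs' : j = s := by omega
          subst hjs'
          rw [fill_ge _ _ le_rfl]
      rw [e1, e2]
    · have hcnd2 : ¬ ∀ t ≤ s, (T - t, pw y (fill s (V ω).2 0) t) ∈ D :=
        fun h => hcnd ((condV ω).mpr h)
      rw [if_neg hcnd]
      simp only [hVdef] at hcnd2
      simp only [hg1def, hVdef]
      rw [if_neg hcnd2, add_zero, hIIx, hIIx]
      unfold IPf
      rw [hminne ω hcnd]
  -- pointwise decomposition, s side
  have step2 : ∀ ω : Ω, (if cnd ω then (0 : ℝ) else II D T y ξ η s (x, ω)) + g2 (V ω) (ξ n ω)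
      = II D T y ξ η s (x, ω) := by
    intro ω
    by_cases hcnd : cnd ω
    · have hcnd2 : ∀ t ≤ s, (T - t, pw y (fill s (V ω).2 0) t) ∈ D := (condV ω).mp hcnd
      rw [if_pos hcnd]
      simp only [hVdef] at hcnd2
      simp only [hg2def, hVdef]
      rw [if_pos hcnd2, zero_add, hIIx]
      unfold IPf
      rw [hmin2 ω hcnd, hTn]
      have e1 : ps D x (fun i => ξ i ω) (n + 1)
          = ps D x (fill n (fun i : Fin n => ξ i ω) (ξ n ω)) (n + 1) := by
        refine ps_congr fun i hi => ?_
        by_cases hin : i < n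
        · exact (fill_agree (fun i => ξ i ω) (ξ n ω) i hin).symm
        · have hin' : i = n := by omega
          subst hin'
          rw [fill_ge _ _ le_rfl]
      have e2 : pw y (fun j => η j ω) s = pw y (fill s (fun j : Fin s => η j ω) 0) s :=
        pw_congr fun j hj => (fill_agree (fun j => η j ω) 0 j hj).symm
      rw [e1, e2]
    · have hcnd2 : ¬ ∀ t ≤ s, (T - t, pw y (fill s (V ω).2 0) t) ∈ D :=
        fun h => hcnd ((condV ω).mpr h)
      rw [if_neg hcnd]
      simp only [hVdef] at hcnd2
      simp only [hg2def, hVdef]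
      rw [if_neg hcnd2, add_zero]
  -- the averaging identity
  have avg : ∀ a : ((Fin n → ℤ) × (Fin s → ℤ)), g1 a 1 + g1 a (-1) = g2 a 1 + g2 a (-1) := by
    intro a
    by_cases hcnd : ∀ t ≤ s, (T - t, pw y (fill s a.2 0) t) ∈ D
    · simp only [hg1def, hg2def, if_pos hcnd]
      have hmem : (n + 1, pw y (fill s a.2 0) s) ∈ D := by
        have := hcnd s le_rfl
        rwa [hTn] at this
      have hpwc1 : pw y (fill s a.2 1) s = pw y (fill s a.2 0) s :=
        pw_congr fun j hj => by rw [fill_lt _ _ hj, fill_lt _ _ hj]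
      have hpwc2 : pw y (fill s a.2 (-1)) s = pw y (fill s a.2 0) s :=
        pw_congr fun j hj => by rw [fill_lt _ _ hj, fill_lt _ _ hj]
      have hpw1 : pw y (fill s a.2 1) (s + 1) = pw y (fill s a.2 0) s + 1 := by
        rw [pw_succ, hpwc1, fill_ge _ _ le_rfl]
      have hpw2 : pw y (fill s a.2 (-1)) (s + 1) = pw y (fill s a.2 0) s - 1 := by
        rw [pw_succ, hpwc2, fill_ge _ _ le_rfl]
        ring
      have hcore := core hD x (pw y (fill s a.2 0) s)
        (fill n a.1 0) (fill n a.1 1) (fill n a.1 (-1))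
        (fun i hi => by rw [fill_lt _ _ hi, fill_lt _ _ hi])
        (fun i hi => by rw [fill_lt _ _ hi, fill_lt _ _ hi])
        (fill_ge _ _ le_rfl) (fill_ge _ _ le_rfl) hmem
      rw [hpw1, hpw2]
      exact_mod_cast hcore.symm
    · simp only [hg1def, hg2def, if_neg hcnd]
  -- independence of the coins from V
  have hmeasSum : ∀ i : ℕ ⊕ ℕ, Measurable (Sum.elim ξ η i) := by
    intro i
    cases i with
    | inl k => exact hξm k
    | inr k => exact hηm k
  set S : Finset (ℕ ⊕ ℕ) := (Finset.range n).image Sum.inl ∪ (Finset.range s).image Sum.inr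
    with hSdef
  have hLmem : ∀ i : Fin n, Sum.inl (i : ℕ) ∈ S := fun i =>
    Finset.mem_union_left _ (Finset.mem_image_of_mem _ (Finset.mem_range.mpr i.isLt))
  have hRmem : ∀ j : Fin s, Sum.inr (j : ℕ) ∈ S := fun j =>
    Finset.mem_union_right _ (Finset.mem_image_of_mem _ (Finset.mem_range.mpr j.isLt))
  have hφmeas : Measurable (fun v : (S → ℤ) =>
      ((fun i : Fin n => v ⟨Sum.inl (i : ℕ), hLmem i⟩),
       (fun j : Fin s => v ⟨Sum.inr (j : ℕ), hRmem j⟩))) :=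
    (measurable_pi_lambda _ fun i => measurable_pi_apply _).prodMk
      (measurable_pi_lambda _ fun j => measurable_pi_apply _)
  have hIndV1 : IndepFun V (η s) P := by
    have hd1 : Disjoint S ({Sum.inr s} : Finset (ℕ ⊕ ℕ)) := by
      simp only [hSdef, Finset.disjoint_singleton_right, Finset.mem_union, Finset.mem_image,
        Finset.mem_range]
      push_neg
      constructor
      · intro a _ h; exact Sum.inl_ne_inr h
      · intro a ha h
        have : a = s := by injection h
        omega
    have hfin := hindep.indepFun_finset S {Sum.inr s} hd1 hmeasSum
    have hψmeas : Measurable (fun v : (({Sum.inr s} : Finset (ℕ ⊕ ℕ)) → ℤ) =>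
        v ⟨Sum.inr s, Finset.mem_singleton_self _⟩) := measurable_pi_apply _
    exact hfin.comp hφmeas hψmeas
  have hIndV2 : IndepFun V (ξ n) P := by
    have hd2 : Disjoint S ({Sum.inl n} : Finset (ℕ ⊕ ℕ)) := by
      simp only [hSdef, Finset.disjoint_singleton_right, Finset.mem_union, Finset.mem_image,
        Finset.mem_range]
      push_neg
      constructor
      · intro a ha h
        have : a = n := by injection h
        omega
      · intro a _ h; exact Sum.inr_ne_inl h
    have hfin := hindep.indepFun_finset S {Sum.inl n} hd2 hmeasSum
    have hψmeas : Measurable (fun v : (({Sum.inl n} : Finset (ℕ ⊕ ℕ)) → ℤ) =>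
        v ⟨Sum.inl n, Finset.mem_singleton_self _⟩) := measurable_pi_apply _
    exact hfin.comp hφmeas hψmeas
  -- integrability of all the pieces (fixed x)
  have mkInt : ∀ f : Ω → ℝ, AEStronglyMeasurable f P →
      (∀ ω, (∀ i, (ξ i ω = 1 ∨ ξ i ω = -1) ∧ (η i ω = 1 ∨ η i ω = -1)) → ‖f ω‖ ≤ C) →
      Integrable f P := by
    intro f hm hb
    refine Integrable.mono' (integrable_const C) hm ?_
    filter_upwards [hBae] with ω h
    exact hb ω h
  have g1bound : ∀ (ω : Ω) (e : ℤ), (∀ i, |ξ i ω| ≤ 1 ∧ |η i ω| ≤ 1) → |e| ≤ 1 →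
      ‖g1 (V ω) e‖ ≤ C := by
    intro ω e hb he
    simp only [hg1def, hVdef]
    by_cases hcnd : ∀ t ≤ s, (T - t, pw y (fill s (V ω).2 0) t) ∈ D
    · rw [if_pos hcnd]
      have h1 : |ps D x (fill n (V ω).1 0) n| ≤ |x| + n := by
        refine ps_abs_le fun i hi => ?_
        rw [fill_lt _ _ hi]
        exact (hb i).1
      have h2 : |pw y (fill s (V ω).2 e) (s + 1)| ≤ |y| + (s + 1) := by
        refine pw_abs_le fun j hj => ?_
        by_cases hjs : j < s
        · rw [fill_lt _ _ hjs]; exact (hb j).2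
        · rw [fill_ge _ _ (by omega)]; exact he
      have h3 : |ps D x (fill n (V ω).1 0) n - pw y (fill s (V ω).2 e) (s + 1)|
          ≤ |x| + |y| + (n : ℤ) + (s + 1) := by
        have := abs_sub (ps D x (fill n (V ω).1 0) n) (pw y (fill s (V ω).2 e) (s + 1))
        omega
      rw [Real.norm_eq_abs, hCdef]
      have h4 : ((n : ℤ) + (s + 1) : ℤ) ≤ 2 * T := by omega
      have h5 : |ps D x (fill n (V ω).1 0) n - pw y (fill s (V ω).2 e) (s + 1)|
          ≤ |x| + |y| + 2 * T := by omega
      rw [abs_of_nonneg (by positivity)]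
      push_cast
      exact_mod_cast h5
    · rw [if_neg hcnd, norm_zero]; exact hC0
  have g2bound : ∀ (ω : Ω) (e : ℤ), (∀ i, |ξ i ω| ≤ 1 ∧ |η i ω| ≤ 1) → |e| ≤ 1 →
      ‖g2 (V ω) e‖ ≤ C := by
    intro ω e hb he
    simp only [hg2def, hVdef]
    by_cases hcnd : ∀ t ≤ s, (T - t, pw y (fill s (V ω).2 0) t) ∈ D
    · rw [if_pos hcnd]
      have h1 : |ps D x (fill n (V ω).1 e) (n + 1)| ≤ |x| + (n + 1) := by
        refine ps_abs_le fun i hi => ?_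
        by_cases hin : i < n
        · rw [fill_lt _ _ hin]; exact (hb i).1
        · rw [fill_ge _ _ (by omega)]; exact he
      have h2 : |pw y (fill s (V ω).2 0) s| ≤ |y| + s := by
        refine pw_abs_le fun j hj => ?_
        rw [fill_lt _ _ hj]
        exact (hb j).2
      have h5 : |ps D x (fill n (V ω).1 e) (n + 1) - pw y (fill s (V ω).2 0) s|
          ≤ |x| + |y| + 2 * T := by
        have := abs_sub (ps D x (fill n (V ω).1 e) (n + 1)) (pw y (fill s (V ω).2 0) s)
        omega
      rw [Real.norm_eq_abs, hCdef, abs_of_nonneg (by positivity)]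
      push_cast
      exact_mod_cast h5
    · rw [if_neg hcnd, norm_zero]; exact hC0
  have intG1c : Integrable (fun ω => g1 (V ω) (η s ω)) P := by
    refine mkInt _ ((measurable_of_countable
      (fun q : ((Fin n → ℤ) × (Fin s → ℤ)) × ℤ => g1 q.1 q.2)).comp
      (hV.prodMk (hηm s))).aestronglyMeasurable ?_
    intro ω h
    exact g1bound ω (η s ω) (habs ω h) ((habs ω h) s).2
  have intG2c : Integrable (fun ω => g2 (V ω) (ξ n ω)) P := by
    refine mkInt _ ((measurable_of_countable
      (fun q : ((Fin n → ℤ) × (Fin s → ℤ)) × ℤ => g2 q.1 q.2)).comp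
      (hV.prodMk (hξm n))).aestronglyMeasurable ?_
    intro ω h
    exact g2bound ω (ξ n ω) (habs ω h) ((habs ω h) n).1
  have intG1p : Integrable (fun ω => g1 (V ω) 1) P := by
    refine mkInt _ ((measurable_of_countable (fun a => g1 a 1)).comp hV).aestronglyMeasurable ?_
    intro ω h
    exact g1bound ω 1 (habs ω h) (by norm_num)
  have intG1m : Integrable (fun ω => g1 (V ω) (-1)) P := by
    refine mkInt _ ((measurable_of_countable (fun a => g1 a (-1))).comp hV).aestronglyMeasurable ?_
    intro ω h
    exact g1bound ω (-1) (habs ω h) (by norm_num)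
  have intG2p : Integrable (fun ω => g2 (V ω) 1) P := by
    refine mkInt _ ((measurable_of_countable (fun a => g2 a 1)).comp hV).aestronglyMeasurable ?_
    intro ω h
    exact g2bound ω 1 (habs ω h) (by norm_num)
  have intG2m : Integrable (fun ω => g2 (V ω) (-1)) P := by
    refine mkInt _ ((measurable_of_countable (fun a => g2 a (-1))).comp hV).aestronglyMeasurable ?_
    intro ω h
    exact g2bound ω (-1) (habs ω h) (by norm_num)
  -- the J part
  have hWω1 : Measurable fun ω : Ω => (fun i : Fin M => ξ i ω) :=
    measurable_pi_lambda _ fun i => hξm i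
  have hWω2 : Measurable fun ω : Ω => (fun j : Fin M => η j ω) :=
    measurable_pi_lambda _ fun j => hηm j
  have hWω : Measurable (fun ω : Ω =>
      ((fun i : Fin M => ξ i ω), (fun j : Fin M => η j ω))) := hWω1.prodMk hWω2
  have intJ : Integrable (fun ω => if cnd ω then (0 : ℝ) else II D T y ξ η s (x, ω)) P := by
    have hfun : (fun ω => if cnd ω then (0 : ℝ) else II D T y ξ η s (x, ω))
        = (fun q : (Fin M → ℤ) × (Fin M → ℤ) =>
            if ∀ t ≤ s, (T - t, pw y (fill M q.2 0) t) ∈ D then (0 : ℝ)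
            else IPf D T s y x (fill M q.1 0) (fill M q.2 0))
          ∘ (fun ω : Ω => ((fun i : Fin M => ξ i ω), (fun j : Fin M => η j ω))) := by
      funext ω
      simp only [Function.comp_apply]
      have hcondiff : cnd ω ↔
          (∀ t ≤ s, (T - t, pw y (fill M (fun j : Fin M => η j ω) 0) t) ∈ D) := by
        have hpweq : ∀ t ≤ s, pw y (fun j => η j ω) t
            = pw y (fill M (fun j : Fin M => η j ω) 0) t := fun t ht =>
          pw_congr fun j hj => (fill_agree (fun j => η j ω) 0 j (by omega)).symm
        constructor
        · intro h t ht; rw [← hpweq t ht]; exact h t ht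
        · intro h t ht; rw [hpweq t ht]; exact h t ht
      by_cases hcnd : cnd ω
      · rw [if_pos hcnd, if_pos (hcondiff.mp hcnd)]
      · rw [if_neg hcnd, if_neg (fun h => hcnd (hcondiff.mpr h)), hIIx]
        exact IPf_congr (fun i hi => (fill_agree (fun k => ξ k ω) 0 i (by omega)).symm)
          (fun j hj => (fill_agree (fun k => η k ω) 0 j (by omega)).symm)
    refine mkInt _ (by rw [hfun]; exact ((measurable_of_countable _).comp hWω).aestronglyMeasurable) ?_
    intro ω h
    by_cases hcnd : cnd ω
    · rw [if_pos hcnd, norm_zero]; exact hC0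
    · rw [if_neg hcnd, hIIx, Real.norm_eq_abs]
      have hb := habs ω h
      have := IPf_abs_le (D := D) (T := T) (t := s) (y := y) (x := x)
        (fun i _ => (hb i).1) (fun j _ => (hb j).2)
      rw [hCdef]
      linarith
  -- the chain of equalities
  have coin1 := integral_coin (hηm s) hV (hηf s) hIndV1 g1 intG1p intG1m
  have coin2 := integral_coin (hξm n) hV (hξf n) hIndV2 g2 intG2p intG2m
  have havg : ∫ ω, g1 (V ω) 1 ∂P + ∫ ω, g1 (V ω) (-1) ∂P
      = ∫ ω, g2 (V ω) 1 ∂P + ∫ ω, g2 (V ω) (-1) ∂P := by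
    rw [← integral_add intG1p intG1m, ← integral_add intG2p intG2m]
    exact integral_congr_ae (Filter.Eventually.of_forall fun ω => avg (V ω))
  calc ∫ ω, II D T y ξ η (s + 1) (x, ω) ∂P
      = ∫ ω, ((if cnd ω then (0 : ℝ) else II D T y ξ η s (x, ω)) + g1 (V ω) (η s ω)) ∂P :=
        integral_congr_ae (Filter.Eventually.of_forall fun ω => step1 ω)
    _ = (∫ ω, (if cnd ω then (0 : ℝ) else II D T y ξ η s (x, ω)) ∂P)
          + ∫ ω, g1 (V ω) (η s ω) ∂P := integral_add intJ intG1c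
    _ = (∫ ω, (if cnd ω then (0 : ℝ) else II D T y ξ η s (x, ω)) ∂P)
          + (∫ ω, g1 (V ω) 1 ∂P + ∫ ω, g1 (V ω) (-1) ∂P) / 2 := by rw [coin1]
    _ = (∫ ω, (if cnd ω then (0 : ℝ) else II D T y ξ η s (x, ω)) ∂P)
          + (∫ ω, g2 (V ω) 1 ∂P + ∫ ω, g2 (V ω) (-1) ∂P) / 2 := by rw [havg]
    _ = (∫ ω, (if cnd ω then (0 : ℝ) else II D T y ξ η s (x, ω)) ∂P)
          + ∫ ω, g2 (V ω) (ξ n ω) ∂P := by rw [coin2]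
    _ = ∫ ω, ((if cnd ω then (0 : ℝ) else II D T y ξ η s (x, ω)) + g2 (V ω) (ξ n ω)) ∂P :=
        (integral_add intJ intG2c).symm
    _ = ∫ ω, II D T y ξ η s (x, ω) ∂P :=
        integral_congr_ae (Filter.Eventually.of_forall fun ω => step2 ω)


/-- the interpolating function
`F(s) = E^λ_y[|X_{σ(τ*∧s)} − Y_{τ*∧s}|]`, with `σ(τ) = ρ^{Root} ∧ (T − τ)` and
`τ* = inf{t : (T−t, Y_t) ∉ D} ∧ T`, is constant on `{0, …, T}`. -/
theorem interpolating_function_constant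
    (P : Measure Ω) [IsProbabilityMeasure P] (ξ η : ℕ → Ω → ℤ)
    (h : IndepSSRWIncrements P ξ η)
    (D : Set (ℕ × ℤ)) (hD : IsRootCont D)
    (lam : Measure ℤ) [IsProbabilityMeasure lam] (hlam : FiniteFirstMoment lam)
    (T : ℕ) (y : ℤ)
    (hUI : UniformIntegrable
      (fun (t : ℕ) (p : ℤ × Ω) => ((walk ξ p.1 (hitBy D (walk ξ p.1) t p.2) p.2 : ℤ) : ℝ))
      1 (lam.prod P))
    (F : ℕ → ℝ)
    (hF : ∀ s, F s = ∫ p : ℤ × Ω,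
      ((|walk ξ p.1
          (hitBy D (walk ξ p.1) (T - min (revHitBy D (walk η y) T p.2) s) p.2) p.2
        - walk η y (min (revHitBy D (walk η y) T p.2) s) p.2| : ℤ) : ℝ) ∂(lam.prod P)) :
    ∀ s, s ≤ T → F s = F 0 := by
  obtain ⟨hξm, hηm, hξf, hηf, hindep⟩ := h
  have hFs : ∀ s, F s = ∫ p : ℤ × Ω, II D T y ξ η s p ∂(lam.prod P) := hF
  have step : ∀ s, s < T → F (s + 1) = F s := by
    intro s hs
    rw [hFs (s + 1), hFs s]
    exact step_eq P ξ η hξm hηm hξf hηf hindep D hD lam hlam T y s hs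
  intro s hsT
  induction s with
  | zero => rfl
  | succ k ih =>
    rw [step k (by omega)]
    exact ih (by omega)


end SwitchingIdentities
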